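/- Let a : ℕ → ℝ be a sequence with 0 < a_n ≤ 1 for all n. If the sequence (ln a_n)_n is completely monotone, then the sequence (a_n)_n itself is completely monotone. -/

import Mathlib

/-- The `n`-th iterated forward difference of a sequence, evaluated at `k`. -/
noncomputable def fdiff (a : ℕ → ℝ) (n k : ℕ) : ℝ :=
  ∑ i ∈ Finset.range (n + 1), (-1 : ℝ) ^ i * (n.choose i : ℝ) * a (k + i)

/-- A sequence is completely monotone if all iterated forward differences of
order `n ≥ 1` are nonnegative. -/
def CompletelyMonotone (a : ℕ → ℝ) : Prop :=
  ∀ n : ℕ, 1 ≤ n → ∀ k : ℕ, 0 ≤ fdiff a n k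

namespace CMaux

def D (f : ℕ → ℝ) : ℕ → ℝ := fun m => f m - f (m + 1)

lemma fdiff_zero (a : ℕ → ℝ) (k : ℕ) : fdiff a 0 k = a k := by simp [fdiff]

lemma fdiff_succ (a : ℕ → ℝ) (n k : ℕ) : fdiff a (n+1) k = fdiff (D a) n k := by
  unfold fdiff D
  rw [Finset.sum_range_succ']
  have pascal : ∀ i ∈ Finset.range (n+1),
      (-1:ℝ) ^ (i+1) * ((n+1).choose (i+1) : ℝ) * a (k + (i+1))
      = (-1:ℝ) ^ (i+1) * (n.choose i : ℝ) * a (k + (i+1))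
        + (-1:ℝ) ^ (i+1) * (n.choose (i+1) : ℝ) * a (k + (i+1)) := by
    intro i _
    rw [Nat.choose_succ_succ]
    push_cast
    ring
  rw [Finset.sum_congr rfl pascal, Finset.sum_add_distrib]
  have e2 : ∑ i ∈ Finset.range (n+1), (-1:ℝ) ^ (i+1) * (n.choose (i+1) : ℝ) * a (k + (i+1))
      + (-1:ℝ)^0 * ((n+1).choose 0 : ℝ) * a (k + 0)
      = ∑ i ∈ Finset.range (n+1), (-1:ℝ) ^ i * (n.choose i : ℝ) * a (k + i) := by
    rw [Finset.sum_range_succ (fun i => (-1:ℝ) ^ (i+1) * (n.choose (i+1) : ℝ) * a (k + (i+1)))]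
    rw [Finset.sum_range_succ' (fun i => (-1:ℝ) ^ i * (n.choose i : ℝ) * a (k + i))]
    simp [Nat.choose_succ_self]
  have e3 : ∀ i ∈ Finset.range (n+1),
      (-1:ℝ) ^ i * (n.choose i : ℝ) * (a (k + i) - a (k + i + 1))
      = (-1:ℝ) ^ i * (n.choose i : ℝ) * a (k + i)
        - (-1:ℝ) ^ i * (n.choose i : ℝ) * a (k + (i+1)) := by
    intro i _; ring_nf
  rw [Finset.sum_congr rfl e3, Finset.sum_sub_distrib]
  have e4 : ∑ i ∈ Finset.range (n+1), (-1:ℝ) ^ (i+1) * (n.choose i : ℝ) * a (k + (i+1))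
      = - ∑ i ∈ Finset.range (n+1), (-1:ℝ) ^ i * (n.choose i : ℝ) * a (k + (i+1)) := by
    rw [← Finset.sum_neg_distrib]
    exact Finset.sum_congr rfl (by intro i _; ring)
  linarith [e2, e4]

lemma fdiff_shift (a : ℕ → ℝ) (n k : ℕ) : fdiff (fun m => a (m+1)) n k = fdiff a n (k+1) := by
  unfold fdiff
  refine Finset.sum_congr rfl fun i _ => ?_
  simp only []
  have : k + i + 1 = k + 1 + i := by omega
  rw [this]

lemma fdiff_add (f g : ℕ → ℝ) (n k : ℕ) :
    fdiff (fun m => f m + g m) n k = fdiff f n k + fdiff g n k := by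
  unfold fdiff
  rw [← Finset.sum_add_distrib]
  exact Finset.sum_congr rfl fun i _ => by ring

lemma fdiff_sub (f g : ℕ → ℝ) (n k : ℕ) :
    fdiff (fun m => f m - g m) n k = fdiff f n k - fdiff g n k := by
  unfold fdiff
  rw [← Finset.sum_sub_distrib]
  exact Finset.sum_congr rfl fun i _ => by ring

lemma fdiff_const (c : ℝ) : ∀ n k, fdiff (fun _ => c) n k = if n = 0 then c else 0 := by
  intro n k
  match n with
  | 0 => simp [fdiff]
  | (n+1) =>
    rw [fdiff_succ]
    have : D (fun _ => c) = fun _ => (0:ℝ) := by funext m; simp [D]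
    rw [this]
    simp [fdiff]

lemma fdiff_mul : ∀ (n : ℕ) (f g : ℕ → ℝ) (k : ℕ),
    fdiff (fun m => f m * g m) n k
    = ∑ j ∈ Finset.range (n+1), (n.choose j : ℝ) * fdiff f j k * fdiff g (n-j) (k+j) := by
  intro n
  induction n with
  | zero => intro f g k; simp [fdiff]
  | succ n IH =>
    intro f g k
    have hD : D (fun m => f m * g m) = fun m => f m * D g m + D f m * g (m+1) := by
      funext m; simp only [D]; ring
    rw [fdiff_succ, hD, fdiff_add, IH f (D g) k, IH (D f) (fun m => g (m+1)) k]
    have e1 : ∀ j ∈ Finset.range (n+1),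
        (n.choose j : ℝ) * fdiff f j k * fdiff (D g) (n-j) (k+j)
        = (n.choose j : ℝ) * fdiff f j k * fdiff g (n+1-j) (k+j) := by
      intro j hj
      rw [Finset.mem_range] at hj
      have : n + 1 - j = (n - j) + 1 := by omega
      rw [this, fdiff_succ]
    have e2 : ∀ j ∈ Finset.range (n+1),
        (n.choose j : ℝ) * fdiff (D f) j k * fdiff (fun m => g (m+1)) (n-j) (k+j)
        = (n.choose j : ℝ) * fdiff f (j+1) k * fdiff g (n-j) (k+j+1) := by
      intro j hj
      rw [fdiff_shift, ← fdiff_succ]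
    rw [Finset.sum_congr rfl e1, Finset.sum_congr rfl e2]
    rw [Finset.sum_range_succ'
      (fun j => ((n+1).choose j : ℝ) * fdiff f j k * fdiff g (n+1-j) (k+j))]
    have e3 : ∀ j ∈ Finset.range (n+1),
        (((n+1).choose (j+1) : ℕ) : ℝ) * fdiff f (j+1) k * fdiff g (n+1-(j+1)) (k+(j+1))
        = (n.choose j : ℝ) * fdiff f (j+1) k * fdiff g (n-j) (k+j+1)
          + (n.choose (j+1) : ℝ) * fdiff f (j+1) k * fdiff g (n-j) (k+j+1) := by
      intro j hj
      have h1 : n + 1 - (j+1) = n - j := by omega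
      have h2 : k + (j+1) = k + j + 1 := by omega
      rw [h1, h2, Nat.choose_succ_succ]
      push_cast
      ring
    rw [Finset.sum_congr rfl e3, Finset.sum_add_distrib]
    have e4 : ∑ j ∈ Finset.range (n+1),
          (n.choose j : ℝ) * fdiff f j k * fdiff g (n+1-j) (k+j)
        = ∑ j ∈ Finset.range (n+1),
            (n.choose (j+1) : ℝ) * fdiff f (j+1) k * fdiff g (n-j) (k+j+1)
          + ((n+1).choose 0 : ℝ) * fdiff f 0 k * fdiff g (n+1-0) (k+0) := by
      rw [Finset.sum_range_succ'
        (fun j => (n.choose j : ℝ) * fdiff f j k * fdiff g (n+1-j) (k+j))]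
      rw [Finset.sum_range_succ
        (fun j => (n.choose (j+1) : ℝ) * fdiff f (j+1) k * fdiff g (n-j) (k+j+1))]
      have : (n.choose (n+1) : ℝ) = 0 := by simp [Nat.choose_succ_self]
      rw [this]
      simp only [zero_mul, mul_zero, add_zero, Nat.choose_zero_right, Nat.cast_one, one_mul]
      congr 1
      refine Finset.sum_congr rfl fun j hj => ?_
      have h1 : n + 1 - (j+1) = n - j := by omega
      have h2 : k + (j+1) = k + j + 1 := by omega
      rw [h1, h2]
    rw [e4]
    ring

/-- Complete monotonicity including order 0. -/
def CM0 (a : ℕ → ℝ) : Prop := ∀ n k, 0 ≤ fdiff a n k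

lemma CM0.mul {f g : ℕ → ℝ} (hf : CM0 f) (hg : CM0 g) : CM0 (fun m => f m * g m) := by
  intro n k
  rw [fdiff_mul]
  refine Finset.sum_nonneg fun j _ => ?_
  exact mul_nonneg (mul_nonneg (Nat.cast_nonneg _) (hf j k)) (hg _ _)

lemma CM0.one : CM0 (fun _ => (1:ℝ)) := by
  intro n k
  rw [fdiff_const]
  split <;> norm_num

lemma CM0.pow {d : ℕ → ℝ} (hd : CM0 d) : ∀ m, CM0 (fun j => d j ^ m) := by
  intro m
  induction m with
  | zero => simpa using CM0.one
  | succ m IH =>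
    have := CM0.mul hd IH
    intro n k
    have e : (fun j => d j * d j ^ m) = fun j => d j ^ (m+1) := by
      funext j; rw [← pow_succ']
    rw [← e]
    exact this n k

lemma CM0.exp {d : ℕ → ℝ} (hd : CM0 d) : CM0 (fun j => Real.exp (d j)) := by
  intro n k
  have hsum : ∀ x : ℝ, HasSum (fun m : ℕ => x ^ m / m.factorial) (Real.exp x) := by
    intro x
    rw [Real.exp_eq_exp_ℝ]
    exact NormedSpace.expSeries_div_hasSum_exp x
  have key : HasSum (fun m : ℕ => fdiff (fun j => d j ^ m) n k / m.factorial)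
      (fdiff (fun j => Real.exp (d j)) n k) := by
    have h1 : ∀ i ∈ Finset.range (n+1), HasSum
        (fun m : ℕ => (-1:ℝ)^i * (n.choose i : ℝ) * (d (k+i) ^ m / m.factorial))
        ((-1:ℝ)^i * (n.choose i : ℝ) * Real.exp (d (k+i))) :=
      fun i _ => (hsum (d (k+i))).mul_left _
    have h2 := hasSum_sum h1
    have e : (fun m : ℕ => ∑ i ∈ Finset.range (n+1),
        (-1:ℝ)^i * (n.choose i : ℝ) * (d (k+i) ^ m / m.factorial))
        = fun m : ℕ => fdiff (fun j => d j ^ m) n k / m.factorial := by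
      funext m
      rw [fdiff, Finset.sum_div]
      exact Finset.sum_congr rfl fun i _ => by ring
    rw [e] at h2
    exact h2
  rw [← key.tsum_eq]
  refine tsum_nonneg fun m => ?_
  exact div_nonneg (hd.pow m n k) (Nat.cast_nonneg _)

end CMaux

open CMaux in
theorem stmt2 (a : ℕ → ℝ) (ha : ∀ n, 0 < a n) (ha1 : ∀ n, a n ≤ 1)
    (h : CompletelyMonotone (fun n => Real.log (a n))) :
    CompletelyMonotone a := by
  set d : ℕ → ℝ := D (fun m => Real.log (a m)) with hdef
  have hdCM : CM0 d := by
    intro n k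
    have := h (n+1) (by omega) k
    rwa [fdiff_succ] at this
  have hdnn : ∀ m, 0 ≤ d m := fun m => by
    have := hdCM 0 m; rwa [fdiff_zero] at this
  have hexp : CM0 (fun j => Real.exp (d j)) := hdCM.exp
  have main : ∀ n k, 0 ≤ fdiff a n k := by
    intro n
    induction n using Nat.strong_induction_on with
    | _ n IH =>
      match n with
      | 0 => intro k; rw [fdiff_zero]; exact (ha k).le
      | (n+1) =>
        intro k
        have hDa : D a = fun m => a (m+1) * (Real.exp (d m) - 1) := by
          funext m
          have hm : a (m+1) ≠ 0 := (ha (m+1)).ne'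
          simp only [D, hdef]
          rw [Real.exp_sub, Real.exp_log (ha m), Real.exp_log (ha (m+1))]
          field_simp
        rw [fdiff_succ, hDa, fdiff_mul]
        refine Finset.sum_nonneg fun j hj => ?_
        rw [Finset.mem_range] at hj
        refine mul_nonneg (mul_nonneg (Nat.cast_nonneg _) ?_) ?_
        · rw [fdiff_shift]
          exact IH j (by omega) (k+1)
        · have hg : fdiff (fun m => Real.exp (d m) - 1) (n-j) (k+j)
              = fdiff (fun j => Real.exp (d j)) (n-j) (k+j)
                - (if n - j = 0 then (1:ℝ) else 0) := by
            rw [fdiff_sub, fdiff_const]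
          rw [hg]
          rcases Nat.eq_zero_or_pos (n - j) with h0 | h0
          · rw [h0, fdiff_zero]
            have := Real.one_le_exp (hdnn (k+j))
            norm_num
            exact hdnn _
          · rw [if_neg (by omega)]
            have := hexp (n-j) (k+j)
            linarith
  exact fun n _ k => main n k
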